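/- Let B be a countable Boolean algebra with ⊥ ≠ ⊤ that is atomless (it has no atoms: for every b ≠ ⊥ there is c with ⊥ < c < b). Then for every b ∈ B with b ≠ ⊥ and b ≠ ⊤, there exists a subset J ⊆ B with b ∈ J such that J generates B as a Boolean subalgebra and J is independent modulo the trivial ideal {⊥}, i.e., J is a basis of B containing b. -/
import Mathlib


/-- A subset of a Boolean algebra closed under the Boolean operations and containing `⊥`
and `⊤`. -/
def IsBooleanSubalgebra {B : Type*} [BooleanAlgebra B] (S : Set B) : Prop :=
  ⊥ ∈ S ∧ ⊤ ∈ S ∧ (∀ a ∈ S, ∀ b ∈ S, a ⊓ b ∈ S) ∧ (∀ a ∈ S, ∀ b ∈ S, a ⊔ b ∈ S) ∧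
    ∀ a ∈ S, aᶜ ∈ S

/-- The Boolean subalgebra of `B` generated by a subset `X`. -/
def genBA {B : Type*} [BooleanAlgebra B] (X : Set B) : Set B :=
  ⋂₀ {S : Set B | IsBooleanSubalgebra S ∧ X ⊆ S}

/-- An ideal of a Boolean algebra: a nonempty subset that is downward closed and closed
under binary joins. -/
def IsIdeal {B : Type*} [BooleanAlgebra B] (I : Set B) : Prop :=
  I.Nonempty ∧ (∀ a b : B, a ≤ b → b ∈ I → a ∈ I) ∧ ∀ a ∈ I, ∀ b ∈ I, a ⊔ b ∈ I

/-- `Y` is independent from `X` modulo `I` in the Boolean algebra `B` : for all finite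
disjoint subsets `F₁, F₂` of `Y` and every element `a` of the Boolean subalgebra generated
by `X` with `a ∉ I`, the element `(⨅ y ∈ F₁, y) ⊓ (⨅ y ∈ F₂, yᶜ) ⊓ a` is not in `I`. -/
def IndepFrom {B : Type*} [BooleanAlgebra B] (Y X I : Set B) : Prop :=
  ∀ F₁ F₂ : Finset B, ↑F₁ ⊆ Y → ↑F₂ ⊆ Y → Disjoint F₁ F₂ →
    ∀ a ∈ genBA X, a ∉ I → (F₁.inf id ⊓ F₂.inf (fun y => yᶜ) ⊓ a) ∉ I

namespace BasisAux

variable {B : Type*} [BooleanAlgebra B] [DecidableEq B]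

lemma genBA_isSub (X : Set B) : IsBooleanSubalgebra (genBA X) := by
  refine ⟨fun S hS => hS.1.1, fun S hS => hS.1.2.1, ?_, ?_, ?_⟩
  · intro a ha b hb S hS; exact hS.1.2.2.1 a (ha S hS) b (hb S hS)
  · intro a ha b hb S hS; exact hS.1.2.2.2.1 a (ha S hS) b (hb S hS)
  · intro a ha S hS; exact hS.1.2.2.2.2 a (ha S hS)

lemma subset_genBA (X : Set B) : X ⊆ genBA X := fun x hx S hS => hS.2 hx

lemma genBA_le {X S : Set B} (hS : IsBooleanSubalgebra S) (hXS : X ⊆ S) : genBA X ⊆ S :=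
  fun _ hx => hx S ⟨hS, hXS⟩

lemma genBA_mono {X Y : Set B} (h : X ⊆ Y) : genBA X ⊆ genBA Y :=
  fun x hx S hS => hx S ⟨hS.1, h.trans hS.2⟩

lemma inf_mem_genBA {X : Set B} {ι : Type*} {s : Finset ι} {f : ι → B}
    (h : ∀ x ∈ s, f x ∈ genBA X) : s.inf f ∈ genBA X := by
  classical
  induction s using Finset.induction_on with
  | empty => simpa using (genBA_isSub X).2.1
  | @insert a s ha ih =>
    rw [Finset.inf_insert]
    exact (genBA_isSub X).2.2.1 _ (h _ (Finset.mem_insert_self _ _))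
      _ (ih fun x hx => h x (Finset.mem_insert_of_mem hx))

lemma sup_mem_genBA {X : Set B} {ι : Type*} {s : Finset ι} {f : ι → B}
    (h : ∀ x ∈ s, f x ∈ genBA X) : s.sup f ∈ genBA X := by
  classical
  induction s using Finset.induction_on with
  | empty => simpa using (genBA_isSub X).1
  | @insert a s ha ih =>
    rw [Finset.sup_insert]
    exact (genBA_isSub X).2.2.2.1 _ (h _ (Finset.mem_insert_self _ _))
      _ (ih fun x hx => h x (Finset.mem_insert_of_mem hx))

/-- Independence for finite sets. -/
def FIndep (J : Finset B) : Prop :=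
  ∀ F₁ F₂ : Finset B, F₁ ⊆ J → F₂ ⊆ J → Disjoint F₁ F₂ →
    F₁.inf id ⊓ F₂.inf (fun y => yᶜ) ≠ ⊥

/-- The elementary "atom" of the finite subalgebra generated by `J` determined by `S ⊆ J`. -/
def mAtom (J S : Finset B) : B := S.inf id ⊓ (J \ S).inf (fun y => yᶜ)

lemma mAtom_ne_bot {J : Finset B} (hJ : FIndep J) {S : Finset B} (hS : S ⊆ J) :
    mAtom J S ≠ ⊥ :=
  hJ S (J \ S) hS (Finset.sdiff_subset) (Finset.disjoint_sdiff)

lemma mAtom_disjoint {J S S' : Finset B} (hS : S ⊆ J) (hS' : S' ⊆ J) (h : S ≠ S') :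
    mAtom J S ⊓ mAtom J S' = ⊥ := by
  have : ∃ j, (j ∈ S ∧ j ∉ S') ∨ (j ∈ S' ∧ j ∉ S) := by
    by_contra hc
    push_neg at hc
    exact h (Finset.ext fun j => ⟨fun hj => (hc j).1 hj, fun hj => (hc j).2 hj⟩)
  obtain ⟨j, hj | hj⟩ := this
  · have h1 : mAtom J S ≤ j := le_trans inf_le_left (Finset.inf_le hj.1)
    have h2 : mAtom J S' ≤ jᶜ :=
      le_trans inf_le_right (Finset.inf_le (Finset.mem_sdiff.2 ⟨hS hj.1, hj.2⟩))
    have := inf_le_inf h1 h2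
    simpa using le_bot_iff.1 (by simpa using this)
  · have h1 : mAtom J S' ≤ j := le_trans inf_le_left (Finset.inf_le hj.1)
    have h2 : mAtom J S ≤ jᶜ :=
      le_trans inf_le_right (Finset.inf_le (Finset.mem_sdiff.2 ⟨hS' hj.1, hj.2⟩))
    have := inf_le_inf h2 h1
    simpa using le_bot_iff.1 (by simpa using this)

lemma sup_mAtom (J : Finset B) : J.powerset.sup (mAtom J) = ⊤ := by
  classical
  induction J using Finset.induction_on with
  | empty => simp [mAtom]
  | @insert a J ha ih =>
    rw [Finset.powerset_insert, Finset.sup_union, Finset.sup_image]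
    have h1 : ∀ S ∈ J.powerset, mAtom (insert a J) S = aᶜ ⊓ mAtom J S := by
      intro S hS
      have haS : a ∉ S := fun h => ha (Finset.mem_powerset.1 hS h)
      rw [mAtom, Finset.insert_sdiff_of_notMem _ haS, Finset.inf_insert, mAtom]
      ac_rfl
    have h2 : ∀ S ∈ J.powerset, mAtom (insert a J) (insert a S) = a ⊓ mAtom J S := by
      intro S hS
      have hSJ : S ⊆ J := Finset.mem_powerset.1 hS
      have hsd : insert a J \ insert a S = J \ S := by
        ext x
        simp only [Finset.mem_sdiff, Finset.mem_insert, not_or]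
        constructor
        · rintro ⟨h1 | h1, h2, h3⟩
          · exact absurd h1 h2
          · exact ⟨h1, h3⟩
        · rintro ⟨h1, h2⟩
          exact ⟨Or.inr h1, fun h => ha (h ▸ h1), h2⟩
      rw [mAtom, hsd, Finset.inf_insert, mAtom, id]
      ac_rfl
    simp only [Function.comp_def]
    rw [Finset.sup_congr rfl h1, Finset.sup_congr rfl fun S hS => h2 S hS,
      ← Finset.sup_inf_distrib_left, ← Finset.sup_inf_distrib_left, ih]
    simp

/-- Key extension lemma: any finite independent set can be extended to a finite
independent set whose generated subalgebra contains a given element `c`. -/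
lemma extend (hatomless : ∀ b : B, b ≠ ⊥ → ∃ c : B, ⊥ < c ∧ c < b)
    (J : Finset B) (c : B) :
    ∃ J' : Finset B, J ⊆ J' ∧ (FIndep J → FIndep J' ∧ c ∈ genBA (↑J' : Set B)) := by
  classical
  by_cases hJ : FIndep J
  swap
  · exact ⟨J, subset_rfl, fun h => absurd h hJ⟩
  -- choose a splitting element inside each atom
  have he : ∀ S : Finset B, S ⊆ J → ∃ e : B, ⊥ < e ∧ e < mAtom J S ∧
      (c ⊓ mAtom J S ≠ ⊥ → ¬ mAtom J S ≤ c → e = c ⊓ mAtom J S) := by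
    intro S hS
    by_cases h1 : c ⊓ mAtom J S ≠ ⊥ ∧ ¬ mAtom J S ≤ c
    · refine ⟨c ⊓ mAtom J S, ?_, ?_, fun _ _ => rfl⟩
      · exact bot_lt_iff_ne_bot.2 h1.1
      · exact lt_of_le_of_ne inf_le_right fun h => h1.2 (by rw [← h]; exact inf_le_left)
    · obtain ⟨e, he1, he2⟩ := hatomless (mAtom J S) (mAtom_ne_bot hJ hS)
      refine ⟨e, he1, he2, fun hc1 hc2 => absurd ⟨hc1, hc2⟩ h1⟩
  choose! e he1 he2 he3 using he
  set d : B := J.powerset.sup e with hd_def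
  have hdm : ∀ S ∈ J.powerset, d ⊓ mAtom J S = e S := by
    intro S hS
    have hSJ : S ⊆ J := Finset.mem_powerset.1 hS
    refine le_antisymm ?_ (le_inf (Finset.le_sup hS) (le_of_lt (he2 S hSJ)))
    rw [hd_def, Finset.sup_inf_distrib_right]
    apply Finset.sup_le
    intro S' hS'
    by_cases hES : S' = S
    · subst hES; exact le_trans inf_le_left le_rfl
    · have : e S' ⊓ mAtom J S ≤ mAtom J S' ⊓ mAtom J S :=
        inf_le_inf_right _ (le_of_lt (he2 S' (Finset.mem_powerset.1 hS')))
      rw [mAtom_disjoint (Finset.mem_powerset.1 hS') hSJ hES] at this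
      exact le_trans this bot_le
  refine ⟨insert d J, Finset.subset_insert _ _, fun _ => ⟨?_, ?_⟩⟩
  · -- independence of insert d J
    intro F₁ F₂ h1 h2 hdis
    set G₁ := F₁.erase d with hG₁def
    set G₂ := F₂.erase d with hG₂def
    have hG₁ : G₁ ⊆ J := by
      intro x hx
      have hxd := Finset.ne_of_mem_erase hx
      rcases Finset.mem_insert.1 (h1 (Finset.mem_of_mem_erase hx)) with h | h
      · exact absurd h hxd
      · exact h
    have hG₂ : G₂ ⊆ J := by
      intro x hx
      have hxd := Finset.ne_of_mem_erase hx
      rcases Finset.mem_insert.1 (h2 (Finset.mem_of_mem_erase hx)) with h | h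
      · exact absurd h hxd
      · exact h
    have hGdis : Disjoint G₁ G₂ := hdis.mono (Finset.erase_subset _ _) (Finset.erase_subset _ _)
    set S : Finset B := J \ G₂ with hSdef
    have hSJ : S ⊆ J := Finset.sdiff_subset
    have hSPJ : S ∈ J.powerset := Finset.mem_powerset.2 hSJ
    have hG₁S : G₁ ⊆ S := by
      intro x hx
      exact Finset.mem_sdiff.2 ⟨hG₁ hx, fun h => (Finset.disjoint_left.1 hGdis hx) h⟩
    have hJS : J \ S = G₂ := by
      rw [hSdef, Finset.sdiff_sdiff_self_left, Finset.inter_eq_right.2 hG₂]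
    have hmle : mAtom J S ≤ G₁.inf id ⊓ G₂.inf (fun y => yᶜ) := by
      rw [mAtom, hJS]
      exact inf_le_inf_right _ (Finset.inf_mono hG₁S)
    by_cases hd1 : d ∈ F₁
    · have hd2 : d ∉ F₂ := fun h => Finset.disjoint_left.1 hdis hd1 h
      have hF₁ : F₁.inf id = d ⊓ G₁.inf id := by
        have h := Finset.inf_insert (s := F₁.erase d) (b := d) (f := (id : B → B))
        rw [Finset.insert_erase hd1] at h
        exact h
      have hF₂ : F₂.inf (fun y => yᶜ) = G₂.inf (fun y => yᶜ) := by
        rw [hG₂def, Finset.erase_eq_of_notMem hd2]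
      have key : e S ≤ F₁.inf id ⊓ F₂.inf (fun y => yᶜ) := by
        rw [hF₁, hF₂, inf_assoc, ← hdm S hSPJ]
        exact inf_le_inf_left _ hmle
      intro hbot
      rw [hbot, le_bot_iff] at key
      exact (bot_lt_iff_ne_bot.1 (he1 S hSJ)) key
    · have hF₁ : F₁.inf id = G₁.inf id := by
        rw [hG₁def, Finset.erase_eq_of_notMem hd1]
      by_cases hd2 : d ∈ F₂
      · have hF₂ : F₂.inf (fun y => yᶜ) = dᶜ ⊓ G₂.inf (fun y => yᶜ) := by
          have h := Finset.inf_insert (s := F₂.erase d) (b := d) (f := fun y : B => yᶜ)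
          rw [Finset.insert_erase hd2] at h
          exact h
        have hne : mAtom J S ⊓ dᶜ ≠ ⊥ := by
          intro h
          have : mAtom J S ≤ d := by
            rwa [← sdiff_eq, sdiff_eq_bot_iff] at h
          have : d ⊓ mAtom J S = mAtom J S := inf_eq_right.2 this
          rw [hdm S hSPJ] at this
          exact absurd this (ne_of_lt (he2 S hSJ))
        have key : mAtom J S ⊓ dᶜ ≤ F₁.inf id ⊓ F₂.inf (fun y => yᶜ) := by
          rw [hF₁, hF₂]
          calc mAtom J S ⊓ dᶜ ≤ (G₁.inf id ⊓ G₂.inf (fun y => yᶜ)) ⊓ dᶜ :=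
                inf_le_inf_right _ hmle
            _ = G₁.inf id ⊓ (dᶜ ⊓ G₂.inf (fun y => yᶜ)) := by ac_rfl
        intro hbot
        rw [hbot, le_bot_iff] at key
        exact hne key
      · have hF₂ : F₂.inf (fun y => yᶜ) = G₂.inf (fun y => yᶜ) := by
          rw [hG₂def, Finset.erase_eq_of_notMem hd2]
        rw [hF₁, hF₂]
        intro hbot
        have := le_bot_iff.1 (hbot ▸ hmle)
        exact mAtom_ne_bot hJ hSJ this
  · -- c ∈ genBA (insert d J)
    set X : Set B := (↑(insert d J) : Set B) with hXdef
    have hmem : ∀ S : Finset B, S ⊆ J → mAtom J S ∈ genBA X := by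
      intro S hS
      apply (genBA_isSub X).2.2.1
      · exact inf_mem_genBA fun x hx => subset_genBA X
          (by simp [hXdef]; exact Or.inr (hS hx))
      · exact inf_mem_genBA fun x hx => (genBA_isSub X).2.2.2.2 x (subset_genBA X
          (by simp [hXdef]; exact Or.inr ((Finset.sdiff_subset) hx)))
    have hsup_mem : ∀ g : Finset B → B, (∀ S ∈ J.powerset, g S = mAtom J S ∨ g S = ⊥) →
        J.powerset.sup g ∈ genBA X := by
      intro g hg
      refine sup_mem_genBA fun S hS => ?_
      rcases hg S hS with h | h <;> rw [h]
      · exact hmem S (Finset.mem_powerset.1 hS)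
      · exact (genBA_isSub X).1
    let fT : Finset B → B := fun S => if mAtom J S ≤ c then mAtom J S else ⊥
    let fU : Finset B → B :=
      fun S => if c ⊓ mAtom J S ≠ ⊥ ∧ ¬ mAtom J S ≤ c then mAtom J S else ⊥
    have hfT : ∀ S, fT S = if mAtom J S ≤ c then mAtom J S else ⊥ := fun S => rfl
    have hfU : ∀ S, fU S = if c ⊓ mAtom J S ≠ ⊥ ∧ ¬ mAtom J S ≤ c then mAtom J S else ⊥ :=
      fun S => rfl
    have hdX : d ∈ genBA X := subset_genBA X (by simp [hXdef])
    have hTX : J.powerset.sup fT ∈ genBA X := by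
      refine hsup_mem fT fun S hS => ?_
      rw [hfT]
      split
      · exact Or.inl rfl
      · exact Or.inr rfl
    have hUX : J.powerset.sup fU ∈ genBA X := by
      refine hsup_mem fU fun S hS => ?_
      rw [hfU]
      split
      · exact Or.inl rfl
      · exact Or.inr rfl
    have hceq : c = J.powerset.sup fT ⊔ (d ⊓ J.powerset.sup fU) := by
      apply le_antisymm
      · conv_lhs => rw [← inf_top_eq c, ← sup_mAtom J, Finset.sup_inf_distrib_left]
        apply Finset.sup_le
        intro S hS
        have hSJ : S ⊆ J := Finset.mem_powerset.1 hS
        by_cases h1 : mAtom J S ≤ c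
        · refine le_trans ?_ le_sup_left
          refine le_trans inf_le_right ?_
          refine le_trans ?_ (Finset.le_sup (f := fT) hS)
          rw [hfT, if_pos h1]
        · by_cases h2 : c ⊓ mAtom J S = ⊥
          · rw [h2]; exact bot_le
          · have hes : e S = c ⊓ mAtom J S := he3 S hSJ h2 h1
            refine le_trans ?_ le_sup_right
            rw [← hes, ← hdm S hS]
            refine inf_le_inf_left _ ?_
            refine le_trans ?_ (Finset.le_sup (f := fU) hS)
            rw [hfU, if_pos ⟨h2, h1⟩]
      · apply sup_le
        · apply Finset.sup_le
          intro S hS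
          rw [hfT]
          split
          · assumption
          · exact bot_le
        · rw [Finset.sup_inf_distrib_left]
          apply Finset.sup_le
          intro S hS
          have hSJ : S ⊆ J := Finset.mem_powerset.1 hS
          rw [hfU]
          split
          · rename_i h
            rw [hdm S hS, he3 S hSJ h.1 h.2]
            exact inf_le_left
          · simp
    rw [hceq]
    exact (genBA_isSub X).2.2.2.1 _ hTX _ ((genBA_isSub X).2.2.1 _ hdX _ hUX)

end BasisAux

/-- In a countable atomless Boolean algebra, every element other than `⊥` and `⊤` belongs
to some basis: an independent (modulo `{⊥}`) generating set. -/


theorem exists_basis_containing {B : Type*} [BooleanAlgebra B] [Countable B]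
    (hne : (⊥ : B) ≠ ⊤)
    (hatomless : ∀ b : B, b ≠ ⊥ → ∃ c : B, ⊥ < c ∧ c < b)
    (b : B) (hb : b ≠ ⊥) (hb' : b ≠ ⊤) :
    ∃ J : Set B, b ∈ J ∧ genBA J = Set.univ ∧ IndepFrom J ∅ {(⊥ : B)} := by
  classical
  open BasisAux in
  obtain ⟨f, hf⟩ := exists_surjective_nat B
  let step : Finset B → B → Finset B := fun K c => Classical.choose (extend hatomless K c)
  have hstep : ∀ K c, K ⊆ step K c ∧
      (FIndep K → FIndep (step K c) ∧ c ∈ genBA (↑(step K c) : Set B)) :=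
    fun K c => Classical.choose_spec (extend hatomless K c)
  let chain : ℕ → Finset B := fun n => Nat.rec {b} (fun n K => step K (f n)) n
  have hchain_succ : ∀ n, chain (n + 1) = step (chain n) (f n) := fun n => rfl
  have hchain0 : FIndep ({b} : Finset B) := by
    intro F₁ F₂ h1 h2 hdis
    rcases Finset.subset_singleton_iff.1 h1 with rfl | rfl <;>
      rcases Finset.subset_singleton_iff.1 h2 with rfl | rfl
    · simpa using hne.symm
    · simpa using fun h => hb' (compl_eq_bot.1 h)
    · simpa using hb
    · exact absurd (Finset.mem_singleton_self b)
        (Finset.disjoint_left.1 hdis (Finset.mem_singleton_self b))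
  have hindep : ∀ n, FIndep (chain n) := by
    intro n
    induction n with
    | zero => exact hchain0
    | succ n ih => exact ((hstep (chain n) (f n)).2 ih).1
  have hmono : ∀ m n, m ≤ n → chain m ⊆ chain n := by
    intro m n h
    induction n with
    | zero => rw [Nat.le_zero.1 h]
    | succ n ih =>
      rcases Nat.lt_or_ge m (n + 1) with h' | h'
      · exact (ih (Nat.lt_succ_iff.1 h')).trans (hstep (chain n) (f n)).1
      · rw [Nat.le_antisymm h h']
  refine ⟨{x : B | ∃ n, x ∈ chain n}, ?_, ?_, ?_⟩
  · exact ⟨0, by exact Finset.mem_singleton_self b⟩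
  · apply Set.eq_univ_of_forall
    intro c
    obtain ⟨n, rfl⟩ := hf c
    have : f n ∈ genBA (↑(chain (n + 1)) : Set B) :=
      ((hstep (chain n) (f n)).2 (hindep n)).2
    refine genBA_mono ?_ this
    intro x hx
    exact ⟨n + 1, hx⟩
  · intro F₁ F₂ h1 h2 hdis a ha hanI
    have haTop : a = ⊤ := by
      have : genBA (∅ : Set B) ⊆ {⊥, ⊤} := by
        apply genBA_le
        · refine ⟨Or.inl rfl, Or.inr rfl, ?_, ?_, ?_⟩
          · intro x hx y hy
            simp only [Set.mem_insert_iff, Set.mem_singleton_iff] at hx hy ⊢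
            rcases hx with rfl | rfl <;> rcases hy with rfl | rfl <;> simp
          · intro x hx y hy
            simp only [Set.mem_insert_iff, Set.mem_singleton_iff] at hx hy ⊢
            rcases hx with rfl | rfl <;> rcases hy with rfl | rfl <;> simp
          · intro x hx
            simp only [Set.mem_insert_iff, Set.mem_singleton_iff] at hx ⊢
            rcases hx with rfl | rfl <;> simp
        · exact Set.empty_subset _
      rcases this ha with h | h
      · exact absurd (h ▸ rfl) hanI
      · exact h
    subst haTop
    -- find a single chain element containing F₁ ∪ F₂
    have hfind : ∀ s : Finset B, (↑s : Set B) ⊆ {x : B | ∃ n, x ∈ chain n} →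
        ∃ N, s ⊆ chain N := by
      intro s
      induction s using Finset.induction_on with
      | empty => exact fun _ => ⟨0, Finset.empty_subset _⟩
      | @insert x s hx ih =>
        intro hs
        obtain ⟨N₁, hN₁⟩ := ih fun y hy => hs (by simpa using Or.inr (by simpa using hy))
        obtain ⟨N₂, hN₂⟩ : ∃ n, x ∈ chain n := hs (by simp)
        refine ⟨max N₁ N₂, Finset.insert_subset ?_ (hN₁.trans (hmono _ _ (le_max_left _ _)))⟩
        exact hmono N₂ _ (le_max_right _ _) hN₂
    obtain ⟨N, hN⟩ := hfind (F₁ ∪ F₂) (by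
      intro x hx
      rcases Finset.mem_union.1 (by simpa using hx) with h | h
      · exact h1 (by simpa using h)
      · exact h2 (by simpa using h))
    have := hindep N F₁ F₂ ((Finset.subset_union_left).trans hN)
      ((Finset.subset_union_right).trans hN) hdis
    simpa using this
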